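/- Let G be a finite group, σ a G-equivariant bijection of a finite G-set A isomorphic as a (ℤ × G)-set to (ℤ × G)/Ĥ(H, m, α). Then for g ∈ G and k ≥ 1, the set of fixed points of g∘σ^k in A is nonempty only if Ĥ(H, m, α) is contained (up to conjugacy) in Ĥ(H', k, g) for some stabilizer data; in particular σ^k has a fixed point iff m divides k and α^{k/m} ∈ H. -/

import Mathlib

/-- The subgroup `Ĥ(H, m, a)` of `ℤ × G` generated by `{0} × H` and `(m, a)`.
Since `ℤ` must be viewed multiplicatively to form the product group, we use
`Multiplicative ℤ × G`; the element `(0, h)` is `(1, h)` multiplicatively. -/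
def hatSubgroup (G : Type*) [Group G] (H : Subgroup G) (m : ℤ) (a : G) :
    Subgroup (Multiplicative ℤ × G) :=
  Subgroup.closure
    ((fun h => ((1 : Multiplicative ℤ), h)) '' (H : Set G) ∪ {(Multiplicative.ofAdd m, a)})

/-- Explicit description of `Ĥ(H, m, a)` as a subgroup, when `a` normalizes `H`. -/
def hatAux (G : Type*) [Group G] (H : Subgroup G) (m : ℤ) (a : G) (ha : a ∈ Subgroup.normalizer (H : Set G)) :
    Subgroup (Multiplicative ℤ × G) where
  carrier := {p | ∃ n : ℤ, ∃ h ∈ H, p.1 = Multiplicative.ofAdd (n * m) ∧ p.2 = h * a ^ n}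
  one_mem' := ⟨0, 1, H.one_mem, by simp, by simp⟩
  mul_mem' := by
    rintro ⟨p1, p2⟩ ⟨q1, q2⟩ ⟨n1, h1, hh1, rfl, rfl⟩ ⟨n2, h2, hh2, rfl, rfl⟩
    refine ⟨n1 + n2, h1 * (a ^ n1 * h2 * (a ^ n1)⁻¹), ?_, ?_, ?_⟩
    · exact H.mul_mem hh1 ((Subgroup.mem_normalizer_iff.mp
        (Subgroup.zpow_mem (Subgroup.normalizer (H : Set G)) ha n1) h2).mp hh2)
    · show Multiplicative.ofAdd (n1 * m) * Multiplicative.ofAdd (n2 * m) = _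
      rw [← ofAdd_add, add_mul]
    · simp [mul_assoc, zpow_add]
  inv_mem' := by
    rintro ⟨p1, p2⟩ ⟨n, h, hh, rfl, rfl⟩
    refine ⟨-n, (a ^ n)⁻¹ * h⁻¹ * a ^ n, ?_, ?_, ?_⟩
    · have := (Subgroup.mem_normalizer_iff.mp
        (Subgroup.zpow_mem (Subgroup.normalizer (H : Set G)) ha (-n)) h⁻¹).mp (H.inv_mem hh)
      simpa [zpow_neg] using this
    · show (Multiplicative.ofAdd (n * m))⁻¹ = _
      rw [← ofAdd_neg, neg_mul]
    · simp [mul_assoc, zpow_neg]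

theorem hatSubgroup_eq_hatAux (G : Type*) [Group G] (H : Subgroup G) (m : ℤ) (a : G)
    (ha : a ∈ Subgroup.normalizer (H : Set G)) : hatSubgroup G H m a = hatAux G H m a ha := by
  apply le_antisymm
  · rw [hatSubgroup, Subgroup.closure_le]
    rintro p (⟨h, hh, rfl⟩ | hp)
    · exact ⟨0, h, hh, by simp, by simp⟩
    · rw [Set.mem_singleton_iff] at hp
      subst hp
      exact ⟨1, 1, H.one_mem, by simp, by simp⟩
  · rintro ⟨p1, p2⟩ ⟨n, h, hh, rfl, rfl⟩
    have h1 : ((1 : Multiplicative ℤ), h) ∈ hatSubgroup G H m a :=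
      Subgroup.subset_closure (Or.inl ⟨h, hh, rfl⟩)
    have h2 : ((Multiplicative.ofAdd m, a) : Multiplicative ℤ × G) ∈ hatSubgroup G H m a :=
      Subgroup.subset_closure (Or.inr rfl)
    have h3 := Subgroup.zpow_mem _ h2 n
    have he : ((1 : Multiplicative ℤ), h) *
        ((Multiplicative.ofAdd m, a) : Multiplicative ℤ × G) ^ n
        = ((Multiplicative.ofAdd (n * m), h * a ^ n) : Multiplicative ℤ × G) := by
      have : (Multiplicative.ofAdd m) ^ n = Multiplicative.ofAdd (n * m) := by
        rw [← ofAdd_zsmul, smul_eq_mul]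
      ext
      · simp only [Prod.fst_mul, Prod.pow_fst, one_mul]; exact this
      · simp
    have := Subgroup.mul_mem _ h1 h3
    rwa [he] at this

theorem mem_hatSubgroup_iff {G : Type*} [Group G] (H : Subgroup G) (m : ℤ) (a : G)
    (ha : a ∈ Subgroup.normalizer (H : Set G)) (p : Multiplicative ℤ × G) :
    p ∈ hatSubgroup G H m a ↔
      ∃ n : ℤ, ∃ h ∈ H, p.1 = Multiplicative.ofAdd (n * m) ∧ p.2 = h * a ^ n := by
  rw [hatSubgroup_eq_hatAux G H m a ha]; rfl

/-- On the `(ℤ × G)`-set `(ℤ × G)/Ĥ(H, m, α)` (where `σ` is the action of `(1, e)`),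
for `g ∈ G` and `k ≥ 1` the map `g ∘ σ^k` has a fixed point iff `(k, g)` lies in some
conjugate of `Ĥ(H, m, α)`; in particular `σ^k` has a fixed point iff `m ∣ k` and
`α^{k/m} ∈ H`. -/
theorem hatSubgroup_fixedPoint_iff {G : Type*} [Group G] [Finite G]
    (H : Subgroup G) (m : ℕ) (α : G) (hm : 0 < m) (hα : α ∈ Subgroup.normalizer (H : Set G))
    (k : ℕ) (hk : 1 ≤ k) :
    (∀ g : G,
      (∃ x : (Multiplicative ℤ × G) ⧸ hatSubgroup G H (m : ℤ) α,
          ((Multiplicative.ofAdd (k : ℤ), g) : Multiplicative ℤ × G) • x = x) ↔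
        ∃ γ : Multiplicative ℤ × G,
          ((Multiplicative.ofAdd (k : ℤ), g) : Multiplicative ℤ × G) ∈
            Subgroup.map (MulAut.conj γ).toMonoidHom (hatSubgroup G H (m : ℤ) α)) ∧
    ((∃ x : (Multiplicative ℤ × G) ⧸ hatSubgroup G H (m : ℤ) α,
        ((Multiplicative.ofAdd (k : ℤ), (1 : G)) : Multiplicative ℤ × G) • x = x) ↔
      (m ∣ k ∧ α ^ (k / m) ∈ H)) := by
  set c0 : Multiplicative ℤ × G := (Multiplicative.ofAdd (k : ℤ), (1 : G))
  have key : ∀ g : G,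
      (∃ x : (Multiplicative ℤ × G) ⧸ hatSubgroup G H (m : ℤ) α,
          ((Multiplicative.ofAdd (k : ℤ), g) : Multiplicative ℤ × G) • x = x) ↔
        ∃ γ : Multiplicative ℤ × G,
          ((Multiplicative.ofAdd (k : ℤ), g) : Multiplicative ℤ × G) ∈
            Subgroup.map (MulAut.conj γ).toMonoidHom (hatSubgroup G H (m : ℤ) α) := by
    intro g
    set c : Multiplicative ℤ × G := (Multiplicative.ofAdd (k : ℤ), g)
    constructor
    · rintro ⟨x, hx⟩
      obtain ⟨y, rfl⟩ := QuotientGroup.mk_surjective x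
      refine ⟨y, ?_⟩
      rw [Subgroup.mem_map_equiv]
      have : (QuotientGroup.mk (c * y) :
          (Multiplicative ℤ × G) ⧸ hatSubgroup G H (m : ℤ) α) = QuotientGroup.mk y := hx
      rw [QuotientGroup.eq] at this
      simpa [MulAut.conj, mul_assoc] using
        (hatSubgroup G H (m : ℤ) α).inv_mem this
    · rintro ⟨γ, hγ⟩
      rw [Subgroup.mem_map_equiv] at hγ
      refine ⟨QuotientGroup.mk γ, ?_⟩
      show (QuotientGroup.mk (c * γ) :
          (Multiplicative ℤ × G) ⧸ hatSubgroup G H (m : ℤ) α) = QuotientGroup.mk γ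
      rw [QuotientGroup.eq]
      have := (hatSubgroup G H (m : ℤ) α).inv_mem hγ
      simpa [MulAut.conj, mul_assoc] using this
  refine ⟨key, ?_⟩
  rw [key 1]
  have conj_eq : ∀ γ : Multiplicative ℤ × G,
      (c0 ∈ Subgroup.map (MulAut.conj γ).toMonoidHom (hatSubgroup G H (m : ℤ) α)) ↔
      c0 ∈ hatSubgroup G H (m : ℤ) α := by
    intro γ
    rw [Subgroup.mem_map_equiv]
    have : (MulAut.conj γ).symm c0 = c0 := by
      simp [MulAut.conj, c0, Prod.ext_iff, mul_comm]
    rw [this]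
  have hmem : c0 ∈ hatSubgroup G H (m : ℤ) α ↔ (m ∣ k ∧ α ^ (k / m) ∈ H) := by
    rw [mem_hatSubgroup_iff H (m : ℤ) α hα]
    constructor
    · rintro ⟨n, h, hh, h1, h2⟩
      have hk' : (k : ℤ) = n * m := by
        have := congrArg Multiplicative.toAdd h1
        simpa [mul_comm, c0] using this
      have hmz : (m : ℤ) ≠ 0 := by exact_mod_cast hm.ne'
      have hdvd : (m : ℤ) ∣ (k : ℤ) := ⟨n, by rw [hk', mul_comm]⟩
      have hdvdn : m ∣ k := by exact_mod_cast hdvd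
      refine ⟨hdvdn, ?_⟩
      have hn : n = ((k / m : ℕ) : ℤ) := by
        have hc : ((k / m : ℕ) : ℤ) * m = (k : ℤ) := by
          exact_mod_cast Nat.div_mul_cancel hdvdn
        exact mul_right_cancel₀ hmz (by rw [hc, ← hk'])
      have h2' : (1 : G) = h * α ^ n := by simpa [c0] using h2
      have : α ^ n = h⁻¹ := eq_inv_of_mul_eq_one_right h2'.symm
      rw [hn, zpow_natCast] at this
      rw [this]
      exact H.inv_mem hh
    · rintro ⟨hdvd, hmem⟩
      refine ⟨((k / m : ℕ) : ℤ), (α ^ (k / m))⁻¹, H.inv_mem hmem, ?_, ?_⟩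
      · have : ((k / m : ℕ) : ℤ) * m = (k : ℤ) := by
          exact_mod_cast Nat.div_mul_cancel hdvd
        show Multiplicative.ofAdd (k : ℤ) = _
        exact congrArg _ this.symm
      · show (1 : G) = _
        rw [zpow_natCast, inv_mul_cancel]
  constructor
  · rintro ⟨γ, hγ⟩; exact hmem.mp ((conj_eq γ).mp hγ)
  · intro h; exact ⟨1, (conj_eq 1).mpr (hmem.mpr h)⟩
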